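/- Define u(r) = r + h(r)/h'(r) where h(r) = r + B·r^{p+1} with B > 0 and 0 < p < 7. Then u'(r) > 0 for all r > 0. -/

import Mathlib

open Real

/-- For `h(r) = r + B r^{p+1}` with `B > 0`, `0 < p < 7`, the function
`u(r) = r + h(r)/h'(r)` satisfies `u'(r) > 0` for all `r > 0`. -/
theorem example_polynomial_u_increasing (B p : ℝ) (hB : 0 < B) (hp : 0 < p) (hp7 : p < 7) :
    ∀ r : ℝ, 0 < r →
      0 < deriv (fun x : ℝ =>
        x + (x + B * x ^ (p + 1)) / (1 + B * (p + 1) * x ^ p)) r := by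
  intro r hr
  have hr' : r ≠ 0 := ne_of_gt hr
  have ha : (0:ℝ) < r ^ p := Real.rpow_pos_of_pos hr p
  set a : ℝ := r ^ p with ha_def
  have h1 : HasDerivAt (fun x : ℝ => x ^ (p + 1)) ((p + 1) * r ^ p) r := by
    have := Real.hasDerivAt_rpow_const (x := r) (p := p + 1) (Or.inl hr')
    simpa using this
  have h2 : HasDerivAt (fun x : ℝ => x ^ p) (p * r ^ (p - 1)) r :=
    Real.hasDerivAt_rpow_const (x := r) (p := p) (Or.inl hr')
  have hN : HasDerivAt (fun x : ℝ => x + B * x ^ (p + 1))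
      (1 + B * ((p + 1) * r ^ p)) r := (hasDerivAt_id r).add (h1.const_mul B)
  have hD : HasDerivAt (fun x : ℝ => 1 + B * (p + 1) * x ^ p)
      (B * (p + 1) * (p * r ^ (p - 1))) r := (h2.const_mul (B * (p + 1))).const_add 1
  have hDpos : (0:ℝ) < 1 + B * (p + 1) * a := by
    have : 0 < B * (p + 1) * a := by positivity
    linarith
  have hDne : (1:ℝ) + B * (p + 1) * r ^ p ≠ 0 := by
    rw [← ha_def]; exact ne_of_gt hDpos
  have hu : HasDerivAt (fun x : ℝ =>
      x + (x + B * x ^ (p + 1)) / (1 + B * (p + 1) * x ^ p))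
      (1 + ((1 + B * ((p + 1) * r ^ p)) * (1 + B * (p + 1) * r ^ p) -
        (r + B * r ^ (p + 1)) * (B * (p + 1) * (p * r ^ (p - 1)))) /
        (1 + B * (p + 1) * r ^ p) ^ 2) r :=
    (hasDerivAt_id r).add (hN.div hD hDne)
  rw [hu.deriv]
  have hpow1 : r ^ (p + 1) = a * r := by
    rw [ha_def, Real.rpow_add hr, Real.rpow_one]
  have hpow2 : r ^ (p - 1) = a / r := by
    rw [ha_def, Real.rpow_sub hr, Real.rpow_one]
  rw [hpow1, hpow2, ← ha_def]
  have hNd : (r + B * (a * r)) * (B * (p + 1) * (p * (a / r)))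
      = B * (p + 1) * p * a * (1 + B * a) := by
    field_simp
  rw [hNd]
  have key : 0 < (1 + B * (p + 1) * a) ^ 2 +
      ((1 + B * ((p + 1) * a)) * (1 + B * (p + 1) * a) -
        B * (p + 1) * p * a * (1 + B * a)) := by
    nlinarith [sq_nonneg (2 * (p + 1) * (p + 2) * (B * a) + (p + 1) * (4 - p)),
      mul_pos (mul_pos hB ha) (mul_pos hp (sub_pos.mpr hp7)),
      sq_nonneg (B * a), mul_pos hB ha, sq_nonneg (B * a * p),
      mul_pos (mul_pos hp (sub_pos.mpr hp7)) (pow_pos (mul_pos hB ha) 2)]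
  have hD2 : (0:ℝ) < (1 + B * (p + 1) * a) ^ 2 := by positivity
  have heq : 1 + ((1 + B * ((p + 1) * a)) * (1 + B * (p + 1) * a) -
        B * (p + 1) * p * a * (1 + B * a)) / (1 + B * (p + 1) * a) ^ 2
      = ((1 + B * (p + 1) * a) ^ 2 +
        ((1 + B * ((p + 1) * a)) * (1 + B * (p + 1) * a) -
          B * (p + 1) * p * a * (1 + B * a))) / (1 + B * (p + 1) * a) ^ 2 := by
    field_simp
  rw [heq]
  exact div_pos key hD2
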